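/- Given a shift-invariant class K_α[Z] with E[‖Z(0)‖^α] = 1 and local random field Θ, the following are equivalent: (i) ‖Z(0)‖ > 0 almost surely; (ii) for some (and then every) Z̃ ∈ K_α[Z], ‖Z̃(t)‖ > 0 almost surely for every t ∈ T; (iii) ‖Θ(t)‖ > 0 almost surely for every t ∈ T; (iv) Θ ∈ K_α[Z]. -/

import Mathlib

open MeasureTheory ProbabilityTheory Filter Set
open scoped ENNReal Classical

noncomputable section

namespace SIRF

variable {l d : ℕ}

/-- The ambient index space `ℝ^l`. -/
abbrev Tl (l : ℕ) : Type := Fin l → ℝ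

/-- The state space `ℝ^d`. -/
abbrev Ed (d : ℕ) : Type := Fin d → ℝ

/-- Sample paths. -/
abbrev Path (l d : ℕ) : Type := Tl l → Ed d

/-- The integer lattice `ℤ^l` inside `ℝ^l`. -/
def latticeZ (l : ℕ) : Set (Tl l) := {t | ∀ i, ∃ n : ℤ, t i = (n : ℝ)}

/-- The rational points of `ℝ^l`. -/
def ratPoints (l : ℕ) : Set (Tl l) := {t | ∀ i, ∃ q : ℚ, t i = (q : ℝ)}

/-- The hypercube `[-a,a]^l`. -/
def box (a : ℝ) : Set (Tl l) := {t | ∀ i, |t i| ≤ a}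

/-- The quadrant of `t` with sign pattern `ε` (`true` = closed `≥`, `false` = `<`). -/
def quadrant (t : Tl l) (ε : Fin l → Bool) : Set (Tl l) :=
  {s | ∀ i, if ε i then t i ≤ s i else s i < t i}

/-- The backward shift `B^h f = f(· - h)`. -/
def Bshift (h : Tl l) (f : Path l d) : Path l d := fun t => f (t - h)

/-- The setting of the paper: either `𝕋 = ℝ^l` with `λ` Lebesgue measure and `𝔻` the rational
points, or `𝕋 = ℤ^l` with `λ` the counting measure on the lattice and `𝔻 = ℤ^l`. -/
def Setting (S : Set (Tl l)) (μT : Measure (Tl l)) (D : Set (Tl l)) : Prop :=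
  (S = Set.univ ∧ μT = volume ∧ D = ratPoints l) ∨
    (S = latticeZ l ∧ μT = Measure.count.restrict (latticeZ l) ∧ D = latticeZ l)

/-- A 1-homogeneous nonnegative Borel measurable map on `ℝ^d`. -/
def HomNorm (nrm : Ed d → ℝ) : Prop :=
  Measurable nrm ∧ (∀ x, 0 ≤ nrm x) ∧ ∀ c : ℝ, 0 ≤ c → ∀ x : Ed d, nrm (c • x) = c * nrm x

/-- `‖x‖^α` as an extended nonnegative real. -/
def mA (nrm : Ed d → ℝ) (α : ℝ) (x : Ed d) : ℝ≥0∞ := ENNReal.ofReal (nrm x ^ α)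

section RF

variable {Ω : Type*} [MeasurableSpace Ω] {Ω' : Type*} [MeasurableSpace Ω']

/-- Quadrant stochastic continuity: along each quadrant of every point the limits in probability
exist (and are finite), and along the closed upper quadrant the limit is the value itself. -/
def QSC (P : Measure Ω) (f : Ω → Tl l → ℝ) : Prop :=
  ∀ t : Tl l, ∀ ε : Fin l → Bool, ∃ g : Ω → ℝ,
    TendstoInMeasure P (fun s ω => f ω s) (nhdsWithin t (quadrant t ε)) g ∧
      ((∀ i, ε i = true) → g = fun ω => f ω t)

/-- Stochastic continuity. -/
def StochCont (P : Measure Ω) (f : Ω → Tl l → ℝ) : Prop :=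
  ∀ t : Tl l, TendstoInMeasure P (fun s ω => f ω s) (nhds t) (fun ω => f ω t)

/-- `D` is a (countable dense) separant for a nonnegative random field. -/
def SeparantOf (P : Measure Ω) (f : Ω → Tl l → ℝ) (D : Set (Tl l)) : Prop :=
  D.Countable ∧ Dense D ∧
    ∀ U : Set (Tl l), IsOpen U → ∀ᵐ ω ∂P,
      (⨆ t ∈ U ∩ D, ENNReal.ofReal (f ω t)) = ⨆ t ∈ U, ENNReal.ofReal (f ω t)

/-- Membership in the class `𝔚`: a separable, jointly measurable random field whose norm is
quadrant stochastically continuous in the continuous case. -/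
structure IsRF (P : Measure Ω) (S : Set (Tl l)) (nrm : Ed d → ℝ) (Z : Ω → Path l d) : Prop where
  jointMeas : Measurable fun p : Ω × Tl l => nrm (Z p.1 p.2)
  separable : S = Set.univ → ∃ D : Set (Tl l), SeparantOf P (fun ω t => nrm (Z ω t)) D
  qsc : S = Set.univ → QSC P fun ω t => nrm (Z ω t)

/-- Condition (C1): local uniform `α`-moments. -/
def CondC1 (P : Measure Ω) (S : Set (Tl l)) (nrm : Ed d → ℝ) (α : ℝ)
    (Z : Ω → Path l d) : Prop :=
  ∀ a : ℝ, 0 < a → (∫⁻ ω, ⨆ t ∈ S ∩ box a, mA nrm α (Z ω t) ∂P) < ⊤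

/-- `P(sup_{t ∈ 𝕋} ‖Z(t)‖ > 0) = 1`. -/
def PosSup (P : Measure Ω) (S : Set (Tl l)) (nrm : Ed d → ℝ) (Z : Ω → Path l d) : Prop :=
  P {ω | ∃ t ∈ S, 0 < nrm (Z ω t)} = 1

/-- The defining functional identity (boll) of the class `K_α[Z]`. -/
def FunIdent (P : Measure Ω) (P' : Measure Ω') (S : Set (Tl l)) (nrm : Ed d → ℝ) (α : ℝ)
    (Z : Ω → Path l d) (Z' : Ω' → Path l d) : Prop :=
  ∀ h ∈ S, ∀ F : Path l d → ℝ≥0∞, Measurable F →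
    ∫⁻ ω, mA nrm α (Z' ω h) * F (fun t => (nrm (Z' ω h))⁻¹ • Z' ω t) ∂P'
      = ∫⁻ ω, mA nrm α (Z ω h) * F (fun t => (nrm (Z ω h))⁻¹ • Z ω t) ∂P

/-- Membership of `Z'` (on its own probability space) in the class `K_α[Z]`. -/
def MemK (P : Measure Ω) (P' : Measure Ω') (S : Set (Tl l)) (nrm : Ed d → ℝ) (α : ℝ)
    (Z : Ω → Path l d) (Z' : Ω' → Path l d) : Prop :=
  IsRF P' S nrm Z' ∧ CondC1 P' S nrm α Z' ∧ PosSup P' S nrm Z' ∧ FunIdent P P' S nrm α Z Z'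

/-- Shift-invariance of the class `K_α[Z]`: some member has all its shifts in the class. -/
def ShiftInvariantK (P : Measure Ω) (S : Set (Tl l)) (nrm : Ed d → ℝ) (α : ℝ)
    (Z : Ω → Path l d) : Prop :=
  ∃ (Ω' : Type) (_ : MeasurableSpace Ω') (P' : Measure Ω'),
    IsProbabilityMeasure P' ∧ P'.IsComplete ∧
      ∃ Z' : Ω' → Path l d, MemK P P' S nrm α Z Z' ∧
        ∀ h ∈ S, MemK P P' S nrm α Z fun ω => Bshift h (Z' ω)

/-- The tilted probability measure `P̂(A) = E[‖Z(0)‖^α 1_A]`. -/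
def Phat (P : Measure Ω) (nrm : Ed d → ℝ) (α : ℝ) (Z : Ω → Path l d) : Measure Ω :=
  P.withDensity fun ω => mA nrm α (Z ω 0)

/-- The local random field `Θ = Z/‖Z(0)‖` (to be considered under `P̂`). -/
def Theta (nrm : Ed d → ℝ) (Z : Ω → Path l d) : Ω → Path l d :=
  fun ω t => (nrm (Z ω 0))⁻¹ • Z ω t

/-- The `α`-Pareto distribution: `P(R > t) = t^{-α}`, `t ≥ 1`. -/
def paretoMeasure (α : ℝ) : Measure ℝ :=
  volume.withDensity fun r => ENNReal.ofReal (if 1 ≤ r then α * r ^ (-(α + 1)) else 0)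

/-- The measure `ν_α(dz) = α z^{-α-1} dz` on `(0,∞)`. -/
def nuAlpha (α : ℝ) : Measure ℝ :=
  volume.withDensity fun z => ENNReal.ofReal (if 0 < z then α * z ^ (-(α + 1)) else 0)

/-- The tail field `Y = R Θ`, realised on the product of the base space with the Pareto space. -/
def Yrf (nrm : Ed d → ℝ) (Z : Ω → Path l d) : Ω × ℝ → Path l d :=
  fun q t => q.2 • Theta nrm Z q.1 t

/-- The law governing `Y = R Θ`: `P̂ ⊗ Pareto(α)`. -/
def QY (P : Measure Ω) (nrm : Ed d → ℝ) (α : ℝ) (Z : Ω → Path l d) : Measure (Ω × ℝ) :=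
  (Phat P nrm α Z).prod (paretoMeasure α)

end RF

/-- `a`-homogeneous measurable maps on path space (the class `H_a`). -/
def IsHom (a : ℝ) (F : Path l d → ℝ≥0∞) : Prop :=
  Measurable F ∧ ∀ c : ℝ, 0 < c → ∀ f : Path l d, F (c • f) = ENNReal.ofReal (c ^ a) * F f

/-- Generalised càdlàg functions on `ℝ^l`: quadrant limits exist, with the closed upper-quadrant
limit equal to the value. -/
def GenCadlag (g : Tl l → ℝ) : Prop :=
  ∀ t : Tl l, ∀ ε : Fin l → Bool, ∃ c : ℝ,
    Tendsto g (nhdsWithin t (quadrant t ε)) (nhds c) ∧ ((∀ i, ε i = true) → c = g t)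

/-- `I(f,g) = ∫_𝕋 ‖f(t)‖^β g(t) λ(dt)`. -/
def Ifun (μT : Measure (Tl l)) (nrm : Ed d → ℝ) (β : ℝ) (g : Tl l → ℝ) (f : Path l d) : ℝ≥0∞ :=
  ∫⁻ t, ENNReal.ofReal (nrm (f t) ^ β) * ENNReal.ofReal (g t) ∂μT

/-- The class `𝔥_a` of the paper. -/
def MemFrakH (S : Set (Tl l)) (μT : Measure (Tl l)) (nrm : Ed d → ℝ) (a : ℝ)
    (F : Path l d → ℝ≥0∞) : Prop :=
  ∃ β : ℝ, 0 ≤ β ∧ ∃ g : Tl l → ℝ, (∀ t, 0 ≤ g t) ∧ (∃ t ∈ S, 0 < g t) ∧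
    (S = Set.univ → GenCadlag g) ∧
    ((∃ (Γa Γb : Path l d → ℝ≥0∞) (c : ℝ≥0∞), IsHom a Γa ∧ IsHom β Γb ∧ c ≠ ⊤ ∧
        (∀ f, Γb f ≤ c) ∧ ∀ f, F f = Γa f * Γb f / Ifun μT nrm β g f) ∨
      (∃ Γa : Path l d → ℝ≥0∞, IsHom a Γa ∧
        ∃ A ∈ ({{0}, {x | 0 < x ∧ x ≠ ⊤}, {⊤}} : Set (Set ℝ≥0∞)),
          ∀ f, F f = Γa f * A.indicator (fun _ => 1) (Ifun μT nrm β g f)))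

/-- The class `H̃` of products of an `𝔥_a`-map with a measurable map. -/
def MemTildeH (S : Set (Tl l)) (μT : Measure (Tl l)) (nrm : Ed d → ℝ)
    (F : Path l d → ℝ≥0∞) : Prop :=
  ∃ a : ℝ, 0 ≤ a ∧ ∃ F₁ F₂ : Path l d → ℝ≥0∞,
    MemFrakH S μT nrm a F₁ ∧ Measurable F₂ ∧ ∀ f, F f = F₁ f * F₂ f

/-- The class `𝒫_𝔻`: strictly positive probability densities on `D` (counting measure). -/
def MemPD (D : Set (Tl l)) (p : Tl l → ℝ) : Prop :=
  (∀ t ∈ D, 0 < p t) ∧ (∫⁻ t in D, ENNReal.ofReal (p t) ∂Measure.count) = 1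

/-- The class `𝒫_𝕋`: strictly positive (càdlàg in the continuous case) probability densities
on `𝕋`. -/
def MemPT (S : Set (Tl l)) (μT : Measure (Tl l)) (p : Tl l → ℝ) : Prop :=
  (∀ t ∈ S, 0 < p t) ∧ (S = Set.univ → GenCadlag p) ∧ (∫⁻ t, ENNReal.ofReal (p t) ∂μT) = 1

section Tail

variable {Ω : Type*} [MeasurableSpace Ω]

/-- The integrability condition (justen). -/
def Justen (Q : Measure Ω) (D : Set (Tl l)) (μD : Measure (Tl l)) (nrm : Ed d → ℝ) (α : ℝ)
    (V : Ω → Path l d) : Prop :=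
  ∀ p : Tl l → ℝ, (∀ t ∈ D, 0 < p t) → (∫⁻ t in D, ENNReal.ofReal (p t) ∂μD) = 1 →
    ∀ a : ℝ, 0 < a →
      (∫⁻ t in D, (∫⁻ ω,
            (⨆ s ∈ D ∩ box a, mA nrm α (V ω (s - t))) /
              (∫⁻ r in D, mA nrm α (V ω (r - t)) * ENNReal.ofReal (p r) ∂μD) ∂Q)
          * ENNReal.ofReal (p t) ∂μD) < ⊤

/-- Spectral tail random fields. -/
structure IsSpectralTail (Q : Measure Ω) (S D : Set (Tl l)) (μT : Measure (Tl l))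
    (nrm : Ed d → ℝ) (α : ℝ) (Θ : Ω → Path l d) : Prop where
  isRF : IsRF Q S nrm Θ
  unitNorm : Q {ω | nrm (Θ ω 0) = 1} = 1
  ident : ∀ F : Path l d → ℝ≥0∞, MemFrakH S μT nrm 0 F → ∀ h ∈ S,
    ∫⁻ ω, mA nrm α (Θ ω h) * F (Θ ω) ∂Q
      = ∫⁻ ω in {ω | nrm (Θ ω (-h)) ≠ 0}, F (Bshift h (Θ ω)) ∂Q
  justen : Justen Q D Measure.count nrm α Θ

/-- Tail random fields. -/
structure IsTailRF (Q : Measure Ω) (S D : Set (Tl l)) (nrm : Ed d → ℝ) (α : ℝ)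
    (Y : Ω → Path l d) : Prop where
  isRF : IsRF Q S nrm Y
  gtOne : Q {ω | 1 < nrm (Y ω 0)} = 1
  ident : ∀ Γ : Path l d → ℝ≥0∞, Measurable Γ → ∀ h ∈ S, ∀ x : ℝ, 0 < x →
    ∫⁻ ω in {ω | 1 < x * nrm (Y ω (-h))}, Γ (x • Bshift h (Y ω)) ∂Q
      = ENNReal.ofReal (x ^ α) * ∫⁻ ω in {ω | x < nrm (Y ω h)}, Γ (Y ω) ∂Q
  justen : Justen Q D Measure.count nrm α Y

end Tail

/-- `S_V(f) = ∫_V ‖f(t)‖^α λ(dt)`. -/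
def SV (μ : Measure (Tl l)) (V : Set (Tl l)) (nrm : Ed d → ℝ) (α : ℝ) (f : Path l d) : ℝ≥0∞ :=
  ∫⁻ t in V, mA nrm α (f t) ∂μ

/-- `B_{V,τ}(f) = ∫_V ‖f(t)‖^τ 1{‖f(t)‖ ≥ 1} λ(dt)`. -/
def BV (μ : Measure (Tl l)) (V : Set (Tl l)) (nrm : Ed d → ℝ) (τ : ℝ) (f : Path l d) : ℝ≥0∞ :=
  ∫⁻ t in V, ENNReal.ofReal (if 1 ≤ nrm (f t) then nrm (f t) ^ τ else 0) ∂μ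

/-- `M_V(f) = sup_{t ∈ V} ‖f(t)‖`. -/
def MV (V : Set (Tl l)) (nrm : Ed d → ℝ) (f : Path l d) : ℝ≥0∞ :=
  ⨆ t ∈ V, ENNReal.ofReal (nrm (f t))

/-- `‖f(t)‖ → 0` as `Σ|t_i| → ∞` along `V`. -/
def VanishAtInfty (V : Set (Tl l)) (nrm : Ed d → ℝ) (f : Path l d) : Prop :=
  Tendsto (fun t => nrm (f t))
    ((Filter.comap (fun t : Tl l => ∑ i, |t i|) Filter.atTop) ⊓ Filter.principal V) (nhds 0)

/-- Full rank lattices on `ℝ^l`. -/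
def IsFullRankLattice (E : Set (Tl l)) : Prop :=
  ∃ A : Matrix (Fin l) (Fin l) ℝ, A.det ≠ 0 ∧
    E = {t | ∃ x : Fin l → ℤ, t = A.mulVec fun i => (x i : ℝ)}

/-- A lattice on `𝕋`: a discrete additive subgroup with countably infinitely many elements. -/
def IsLatticeOn (S E : Set (Tl l)) : Prop :=
  E ⊆ S ∧ (0 : Tl l) ∈ E ∧ (∀ x ∈ E, ∀ y ∈ E, x - y ∈ E) ∧ E.Countable ∧ E.Infinite ∧
    ∀ x ∈ E, ∃ ε : ℝ, 0 < ε ∧ ∀ y ∈ E, y ≠ x → ε ≤ ∑ i, |x i - y i|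

/-- An additive subgroup of `𝕋` with countably infinitely many elements. -/
def IsCountableSubgroup (S E : Set (Tl l)) : Prop :=
  E ⊆ S ∧ (0 : Tl l) ∈ E ∧ (∀ x ∈ E, ∀ y ∈ E, x - y ∈ E) ∧ E.Countable ∧ E.Infinite

/-- A shift-invariant total order on `𝕋`. -/
def ShiftInvOrder (r : Tl l → Tl l → Prop) : Prop :=
  IsLinearOrder (Tl l) r ∧ ∀ i j k : Tl l, r i j → r (i + k) (j + k)

/-- `j` is the infargsup of `‖f‖` on `V` with respect to the order `r`. -/
def IsInfArgSup (r : Tl l → Tl l → Prop) (V : Set (Tl l)) (nrm : Ed d → ℝ)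
    (f : Path l d) (j : Tl l) : Prop :=
  j ∈ V ∧ ENNReal.ofReal (nrm (f j)) = MV V nrm f ∧
    ∀ i ∈ V, ENNReal.ofReal (nrm (f i)) = MV V nrm f → r j i

/-- `j` is the first exceedance of level `1` of `‖f‖` on `V` with respect to the order `r`. -/
def IsFirstExceed (r : Tl l → Tl l → Prop) (V : Set (Tl l)) (nrm : Ed d → ℝ)
    (f : Path l d) (j : Tl l) : Prop :=
  j ∈ V ∧ 1 < nrm (f j) ∧ ∀ i ∈ V, 1 < nrm (f i) → r j i

/-- Property A1 of maps `J : 𝔻 → ℝ̄^l` : `J(B^j f) = J(f) + j` for `j ∈ E`. -/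
def A1prop (E : Set (Tl l)) (J : Path l d → (Fin l → EReal)) : Prop :=
  ∀ j ∈ E, ∀ f : Path l d, ∀ i, J (Bshift j f) i = J f i + (j i : EReal)

/-- `0`-homogeneity of `J`. -/
def ZeroHomJ (J : Path l d → (Fin l → EReal)) : Prop :=
  ∀ c : ℝ, 0 < c → ∀ f : Path l d, J (c • f) = J f

/-- `J(f) = j ∈ E`. -/
def JinAt (E : Set (Tl l)) (J : Path l d → (Fin l → EReal)) (f : Path l d) (j : Tl l) : Prop :=
  j ∈ E ∧ ∀ i, J f i = ((j i : ℝ) : EReal)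

/-- `J(f) ∈ E`. -/
def Jin (E : Set (Tl l)) (J : Path l d → (Fin l → EReal)) (f : Path l d) : Prop :=
  ∃ j, JinAt E J f j

/-- Property A2: `J(f) = j ∈ E` implies `‖f(j)‖ > 0`. -/
def A2prop (E : Set (Tl l)) (nrm : Ed d → ℝ) (J : Path l d → (Fin l → EReal)) : Prop :=
  ∀ f : Path l d, ∀ j, JinAt E J f j → 0 < nrm (f j)

/-- Property A3: `J(f) = j ∈ E` implies `‖f(j)‖ > min(1, ‖f(0)‖)`. -/
def A3prop (E : Set (Tl l)) (nrm : Ed d → ℝ) (J : Path l d → (Fin l → EReal)) : Prop :=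
  ∀ f : Path l d, ∀ j, JinAt E J f j → min 1 (nrm (f 0)) < nrm (f j)

/-- The extremal index of `Z` with respect to `L`:
`θ = lim n^{-l} E[max_{t ∈ [0,n]^l ∩ L} ‖Z(t)‖^α]`. -/
def ExtIndex {Ω : Type*} [MeasurableSpace Ω] (P : Measure Ω) (L : Set (Tl l))
    (nrm : Ed d → ℝ) (α : ℝ) (Z : Ω → Path l d) (θ : ℝ≥0∞) : Prop :=
  Tendsto (fun n : ℕ =>
      (∫⁻ ω, ⨆ t ∈ L ∩ {t : Tl l | ∀ i, 0 ≤ t i ∧ t i ≤ (n : ℝ)}, mA nrm α (Z ω t) ∂P)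
        / (n : ℝ≥0∞) ^ l)
    atTop (nhds θ)

end SIRF

namespace SIRF

section Aux

variable {l d : ℕ}

lemma setting_zero_mem {S : Set (Tl l)} {μT : Measure (Tl l)} {D : Set (Tl l)}
    (hset : Setting S μT D) : (0 : Tl l) ∈ S := by
  rcases hset with ⟨hS, -, -⟩ | ⟨hS, -, -⟩
  · simp [hS]
  · rw [hS]; intro i; exact ⟨0, by simp⟩

lemma setting_sub_mem {S : Set (Tl l)} {μT : Measure (Tl l)} {D : Set (Tl l)}
    (hset : Setting S μT D) {s h : Tl l} (hs : s ∈ S) (hh : h ∈ S) : s - h ∈ S := by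
  rcases hset with ⟨hS, -, -⟩ | ⟨hS, -, -⟩
  · simp [hS]
  · rw [hS] at hs hh ⊢
    intro i
    obtain ⟨n, hn⟩ := hs i; obtain ⟨m, hm⟩ := hh i
    exact ⟨n - m, by simp [Pi.sub_apply, hn, hm]⟩

lemma latticeZ_countable (l : ℕ) : (latticeZ l).Countable := by
  have hsub : latticeZ l ⊆ Set.range (fun x : Fin l → ℤ => (fun i => (x i : ℝ) : Tl l)) := by
    intro t ht
    choose n hn using ht
    exact ⟨n, by funext i; exact (hn i).symm⟩
  exact (Set.countable_range _).mono hsub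

lemma sectionMeas {Ω : Type*} [MeasurableSpace Ω] {P : Measure Ω} {S : Set (Tl l)}
    {nrm : Ed d → ℝ} {Z : Ω → Path l d} (hZ : IsRF P S nrm Z) (t : Tl l) :
    Measurable fun ω => nrm (Z ω t) :=
  hZ.jointMeas.comp (measurable_id.prodMk measurable_const)

lemma mA_meas {Ω : Type*} [MeasurableSpace Ω] {P : Measure Ω} {S : Set (Tl l)}
    {nrm : Ed d → ℝ} {Z : Ω → Path l d} (hZ : IsRF P S nrm Z) {α : ℝ} (hα : 0 < α) (t : Tl l) :
    Measurable fun ω => mA nrm α (Z ω t) :=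
  ENNReal.measurable_ofReal.comp
    ((Real.continuous_rpow_const hα.le).measurable.comp (sectionMeas hZ t))

lemma mA_eq_zero_iff {nrm : Ed d → ℝ} (hnrm : HomNorm nrm) {α : ℝ} (hα : 0 < α) (x : Ed d) :
    mA nrm α x = 0 ↔ nrm x = 0 := by
  rw [mA, ENNReal.ofReal_eq_zero]
  constructor
  · intro h
    have h0 := hnrm.2.1 x
    have hz : nrm x ^ α = 0 := le_antisymm h (Real.rpow_nonneg h0 α)
    exact (Real.rpow_eq_zero h0 hα.ne').mp hz
  · intro h; rw [h, Real.zero_rpow hα.ne']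

lemma mA_lt_top {nrm : Ed d → ℝ} (α : ℝ) (x : Ed d) : mA nrm α x < ⊤ :=
  ENNReal.ofReal_lt_top

/-- The shift-invariant bivariate functional `A(s,u) = E[‖Z(s)‖^α 1{‖Z(u)‖=0}]`. -/
def Afun (nrm : Ed d → ℝ) (α : ℝ) {Ω : Type*} [MeasurableSpace Ω] (Q : Measure Ω)
    (V : Ω → Path l d) (s u : Tl l) : ℝ≥0∞ :=
  ∫⁻ ω, mA nrm α (V ω s) * (if nrm (V ω u) = 0 then 1 else 0) ∂Q

lemma Fu_meas {nrm : Ed d → ℝ} (hnrm : HomNorm nrm) (u : Tl l) :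
    Measurable fun f : Path l d => (if nrm (f u) = 0 then (1 : ℝ≥0∞) else 0) := by
  refine Measurable.ite ?_ measurable_const measurable_const
  exact (hnrm.1.comp (measurable_pi_apply u)) (measurableSet_singleton 0)

lemma key_pointwise {nrm : Ed d → ℝ} (hnrm : HomNorm nrm) {α : ℝ} (hα : 0 < α)
    (W : Path l d) (s u : Tl l) :
    mA nrm α (W s) * (if nrm ((fun t => (nrm (W s))⁻¹ • W t) u) = 0 then (1 : ℝ≥0∞) else 0)
      = mA nrm α (W s) * (if nrm (W u) = 0 then 1 else 0) := by
  by_cases h : nrm (W s) = 0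
  · have h0 : mA nrm α (W s) = 0 := (mA_eq_zero_iff hnrm hα _).mpr h
    simp [h0]
  · have hc : (nrm ((nrm (W s))⁻¹ • W u) = 0) ↔ (nrm (W u) = 0) := by
      rw [hnrm.2.2 _ (inv_nonneg.mpr (hnrm.2.1 _))]
      constructor
      · intro hh
        rcases mul_eq_zero.mp hh with h1 | h1
        · exact absurd (inv_eq_zero.mp h1) h
        · exact h1
      · intro hh; rw [hh, mul_zero]
    simp only [hc]

lemma memK_Afun {Ω Ω' : Type*} [MeasurableSpace Ω] [MeasurableSpace Ω']
    {P : Measure Ω} {P' : Measure Ω'} {S : Set (Tl l)} {nrm : Ed d → ℝ} (hnrm : HomNorm nrm)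
    {α : ℝ} (hα : 0 < α) {Z : Ω → Path l d} {Z' : Ω' → Path l d}
    (hfi : FunIdent P P' S nrm α Z Z') {s : Tl l} (hs : s ∈ S) (u : Tl l) :
    Afun nrm α P' Z' s u = Afun nrm α P Z s u := by
  have hident := hfi s hs (fun f => if nrm (f u) = 0 then 1 else 0) (Fu_meas hnrm u)
  calc Afun nrm α P' Z' s u
      = ∫⁻ ω, mA nrm α (Z' ω s) *
          (if nrm ((fun t => (nrm (Z' ω s))⁻¹ • Z' ω t) u) = 0 then 1 else 0) ∂P' :=
        lintegral_congr fun ω => (key_pointwise hnrm hα (Z' ω) s u).symm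
    _ = ∫⁻ ω, mA nrm α (Z ω s) *
          (if nrm ((fun t => (nrm (Z ω s))⁻¹ • Z ω t) u) = 0 then 1 else 0) ∂P := hident
    _ = Afun nrm α P Z s u := lintegral_congr fun ω => key_pointwise hnrm hα (Z ω) s u

lemma Afun_eq_set {Ω : Type*} [MeasurableSpace Ω] {Q : Measure Ω} {S : Set (Tl l)}
    {nrm : Ed d → ℝ} {α : ℝ} {V : Ω → Path l d} (hV : IsRF Q S nrm V) (s u : Tl l) :
    Afun nrm α Q V s u = ∫⁻ ω in {ω | nrm (V ω u) = 0}, mA nrm α (V ω s) ∂Q := by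
  have hN : MeasurableSet {ω | nrm (V ω u) = 0} :=
    (sectionMeas hV u) (measurableSet_singleton 0)
  rw [← lintegral_indicator hN]
  refine lintegral_congr fun ω => ?_
  by_cases h : nrm (V ω u) = 0 <;>
    simp [Afun, Set.indicator_apply, h, Set.mem_setOf_eq]

lemma Afun_zero_of_null {Ω : Type*} [MeasurableSpace Ω] {Q : Measure Ω} {S : Set (Tl l)}
    {nrm : Ed d → ℝ} {α : ℝ} {V : Ω → Path l d} (hV : IsRF Q S nrm V) {u : Tl l}
    (hnull : Q {ω | nrm (V ω u) = 0} = 0) (s : Tl l) :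
    Afun nrm α Q V s u = 0 := by
  rw [Afun_eq_set hV s u, Measure.restrict_eq_zero.mpr hnull, lintegral_zero_measure]

lemma pos_compl_iff {Ω : Type*} [MeasurableSpace Ω] {Q : Measure Ω} [IsProbabilityMeasure Q]
    {S : Set (Tl l)} {nrm : Ed d → ℝ} (hnrm : HomNorm nrm) {V : Ω → Path l d}
    (hV : IsRF Q S nrm V) (t : Tl l) :
    Q {ω | 0 < nrm (V ω t)} = 1 ↔ Q {ω | nrm (V ω t) = 0} = 0 := by
  have hset_eq : {ω | 0 < nrm (V ω t)} = {ω | nrm (V ω t) = 0}ᶜ := by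
    ext ω
    simp only [Set.mem_setOf_eq, Set.mem_compl_iff]
    constructor
    · intro h h0; rw [h0] at h; exact lt_irrefl _ h
    · intro h; exact lt_of_le_of_ne (hnrm.2.1 _) (Ne.symm h)
  rw [hset_eq]
  exact prob_compl_eq_one_iff ((sectionMeas hV t) (measurableSet_singleton 0))

lemma shift_Afun {Ω : Type*} [MeasurableSpace Ω] {P : Measure Ω}
    {S : Set (Tl l)} {μT : Measure (Tl l)} {D : Set (Tl l)} (hset : Setting S μT D)
    {nrm : Ed d → ℝ} (hnrm : HomNorm nrm) {α : ℝ} (hα : 0 < α) {Z : Ω → Path l d}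
    (hshift : ShiftInvariantK P S nrm α Z) {s h : Tl l} (hs : s ∈ S) (hh : h ∈ S) (u : Tl l) :
    Afun nrm α P Z (s - h) (u - h) = Afun nrm α P Z s u := by
  obtain ⟨Ω', mΩ', P', hprob, hcomp, Z', hmem, hall⟩ := hshift
  have base : Afun nrm α P' Z' (s - h) (u - h) = Afun nrm α P Z (s - h) (u - h) :=
    memK_Afun hnrm hα hmem.2.2.2 (setting_sub_mem hset hs hh) (u - h)
  have hBsh : Afun nrm α P' (fun ω => Bshift h (Z' ω)) s u = Afun nrm α P Z s u :=
    memK_Afun hnrm hα (hall h hh).2.2.2 hs u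
  have key : Afun nrm α P' (fun ω => Bshift h (Z' ω)) s u = Afun nrm α P' Z' (s - h) (u - h) :=
    rfl
  rw [← base, ← key, hBsh]

lemma null_of_weighted_null {Ω'' : Type*} [MeasurableSpace Ω''] {Q : Measure Ω''}
    [IsProbabilityMeasure Q] {S : Set (Tl l)} {μT : Measure (Tl l)} {D : Set (Tl l)}
    (hset : Setting S μT D) {nrm : Ed d → ℝ} (hnrm : HomNorm nrm) {α : ℝ} (hα : 0 < α)
    {V : Ω'' → Path l d} (hV : IsRF Q S nrm V) (hps : PosSup Q S nrm V)
    {N : Set Ω''} (hN : MeasurableSet N)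
    (hw : ∀ s ∈ S, ∫⁻ ω in N, mA nrm α (V ω s) ∂Q = 0) : Q N = 0 := by
  obtain ⟨C, hCc, hCS, hae⟩ : ∃ C : Set (Tl l), C.Countable ∧ C ⊆ S ∧
      ∀ᵐ ω ∂Q, (∀ s ∈ C, nrm (V ω s) = 0) → ∀ t ∈ S, nrm (V ω t) = 0 := by
    rcases hset with ⟨hS, -, -⟩ | ⟨hS, -, -⟩
    · obtain ⟨D', hD'c, hD'dense, hsep⟩ := hV.separable hS
      refine ⟨D', hD'c, by rw [hS]; exact Set.subset_univ _, ?_⟩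
      filter_upwards [hsep Set.univ isOpen_univ] with ω hω hzero t ht
      have hsup : (⨆ t ∈ (Set.univ : Set (Tl l)), ENNReal.ofReal (nrm (V ω t))) = 0 := by
        rw [← hω]
        refine le_antisymm (iSup₂_le fun s hs => ?_) zero_le
        rw [hzero s hs.2]
        simp
      have hle : ENNReal.ofReal (nrm (V ω t)) ≤ 0 := by
        rw [← hsup]
        exact le_iSup₂ (f := fun (t : Tl l) (_ : t ∈ (Set.univ : Set (Tl l))) =>
          ENNReal.ofReal (nrm (V ω t))) t (Set.mem_univ t)
      have h0 : nrm (V ω t) ≤ 0 := ENNReal.ofReal_eq_zero.mp (le_antisymm hle zero_le)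
      exact le_antisymm h0 (hnrm.2.1 _)
    · refine ⟨S, by rw [hS]; exact latticeZ_countable l, le_refl _,
        Filter.Eventually.of_forall fun ω h t ht => h t ht⟩
  set A : Set Ω'' := {ω | ∀ s ∈ C, nrm (V ω s) = 0} with hA
  have hAmeas : MeasurableSet A := by
    have hAeq : A = ⋂ s ∈ C, {ω | nrm (V ω s) = 0} := by
      ext ω; simp [hA]
    rw [hAeq]
    exact MeasurableSet.biInter hCc fun s _ => (sectionMeas hV s) (measurableSet_singleton 0)
  have hbad : Q {ω | ¬ ((∀ s ∈ C, nrm (V ω s) = 0) → ∀ t ∈ S, nrm (V ω t) = 0)} = 0 :=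
    ae_iff.mp hae
  have hQA : Q A = 0 := by
    have hsub : {ω | ∃ t ∈ S, 0 < nrm (V ω t)} ⊆
        Aᶜ ∪ {ω | ¬ ((∀ s ∈ C, nrm (V ω s) = 0) → ∀ t ∈ S, nrm (V ω t) = 0)} := by
      intro ω hω
      by_cases hgood : (∀ s ∈ C, nrm (V ω s) = 0) → ∀ t ∈ S, nrm (V ω t) = 0
      · left
        intro hmemA
        obtain ⟨t, ht, htpos⟩ := hω
        exact absurd (hgood hmemA t ht) (ne_of_gt htpos)
      · right; exact hgood
    have h1 : (1 : ℝ≥0∞) ≤ Q Aᶜ := by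
      calc (1 : ℝ≥0∞) = Q {ω | ∃ t ∈ S, 0 < nrm (V ω t)} := hps.symm
        _ ≤ Q (Aᶜ ∪ _) := measure_mono hsub
        _ ≤ Q Aᶜ + Q _ := measure_union_le _ _
        _ = Q Aᶜ := by rw [hbad, add_zero]
    have h2 : Q Aᶜ = 1 := le_antisymm prob_le_one h1
    have h3 := measure_add_measure_compl (μ := Q) hAmeas
    rw [h2, measure_univ] at h3
    have h4 : Q A + 1 = 0 + 1 := by rw [zero_add]; exact h3
    exact WithTop.add_right_cancel ENNReal.one_ne_top h4
  have hcover : N ⊆ A ∪ ⋃ s ∈ C, (N ∩ {ω | nrm (V ω s) ≠ 0}) := by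
    intro ω hω
    by_cases h : ∀ s ∈ C, nrm (V ω s) = 0
    · left; exact h
    · right
      push_neg at h
      obtain ⟨s, hs, hns⟩ := h
      exact Set.mem_biUnion hs ⟨hω, hns⟩
  refine le_antisymm ?_ zero_le
  calc Q N ≤ Q (A ∪ ⋃ s ∈ C, (N ∩ {ω | nrm (V ω s) ≠ 0})) := measure_mono hcover
    _ ≤ Q A + Q (⋃ s ∈ C, (N ∩ {ω | nrm (V ω s) ≠ 0})) := measure_union_le _ _
    _ = 0 := by
        rw [hQA, zero_add]
        refine (measure_biUnion_null_iff hCc).mpr fun s hs => ?_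
        have hzero := hw s (hCS hs)
        have hmAz : ∀ᵐ ω ∂Q, ω ∈ N → mA nrm α (V ω s) = 0 := by
          have := (lintegral_eq_zero_iff (mA_meas hV hα s)).mp hzero
          exact (ae_restrict_iff' hN).mp this
        rw [← ae_iff] at hbad
        have : N ∩ {ω | nrm (V ω s) ≠ 0} ⊆ {ω | ¬ (ω ∈ N → mA nrm α (V ω s) = 0)} := by
          intro ω hω hcon
          exact hω.2 ((mA_eq_zero_iff hnrm hα _).mp (hcon hω.1))
        exact measure_mono_null this (ae_iff.mp hmAz)

lemma mA_int_lt_top {Ω : Type*} [MeasurableSpace Ω] {P : Measure Ω} {S : Set (Tl l)}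
    {nrm : Ed d → ℝ} {α : ℝ} {Z : Ω → Path l d}
    (hC1 : CondC1 P S nrm α Z) {h : Tl l} (hh : h ∈ S) :
    ∫⁻ ω, mA nrm α (Z ω h) ∂P < ⊤ := by
  set a : ℝ := (∑ i, |h i|) + 1 with ha_def
  have ha : 0 < a := by positivity
  refine lt_of_le_of_lt (lintegral_mono fun ω => ?_) (hC1 a ha)
  refine le_iSup₂ (f := fun (t : Tl l) (_ : t ∈ S ∩ box a) => mA nrm α (Z ω t)) h ⟨hh, ?_⟩
  intro i
  calc |h i| ≤ ∑ j, |h j| := Finset.single_le_sum (f := fun j => |h j|) (fun j _ => abs_nonneg _) (Finset.mem_univ i)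
    _ ≤ a := le_add_of_nonneg_right zero_le_one

section ThetaFacts

variable {Ω : Type*} [MeasurableSpace Ω] {P : Measure Ω} {S : Set (Tl l)}
  {nrm : Ed d → ℝ} {α : ℝ} {Z : Ω → Path l d}

lemma nrm_theta (hnrm : HomNorm nrm) (Z : Ω → Path l d) (ω : Ω) (t : Tl l) :
    nrm (Theta nrm Z ω t) = (nrm (Z ω 0))⁻¹ * nrm (Z ω t) :=
  hnrm.2.2 _ (inv_nonneg.mpr (hnrm.2.1 _)) _

lemma rho_mul_mA_eq (hnrm : HomNorm nrm) (hα : 0 < α) (ω : Ω) (t : Tl l)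
    (h : nrm (Z ω 0) ≠ 0) :
    mA nrm α (Z ω 0) * mA nrm α (Theta nrm Z ω t) = mA nrm α (Z ω t) := by
  have h0 := hnrm.2.1 (Z ω 0)
  have ht := hnrm.2.1 (Z ω t)
  rw [mA, mA, mA, nrm_theta hnrm, ← ENNReal.ofReal_mul (Real.rpow_nonneg h0 α),
    ← Real.mul_rpow h0 (mul_nonneg (inv_nonneg.mpr h0) ht)]
  congr 2
  rw [← mul_assoc, mul_inv_cancel₀ h, one_mul]

lemma rho_mul_mA_le (hnrm : HomNorm nrm) (hα : 0 < α) (ω : Ω) (t : Tl l) :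
    mA nrm α (Z ω 0) * mA nrm α (Theta nrm Z ω t) ≤ mA nrm α (Z ω t) := by
  by_cases h : nrm (Z ω 0) = 0
  · rw [(mA_eq_zero_iff hnrm hα _).mpr h, zero_mul]
    exact zero_le
  · exact le_of_eq (rho_mul_mA_eq hnrm hα ω t h)

lemma theta_section_meas (hnrm : HomNorm nrm) (hZ : IsRF P S nrm Z) (t : Tl l) :
    Measurable fun ω => nrm (Theta nrm Z ω t) := by
  have : (fun ω => nrm (Theta nrm Z ω t)) =
      fun ω => (nrm (Z ω 0))⁻¹ * nrm (Z ω t) := funext fun ω => nrm_theta hnrm Z ω t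
  rw [this]
  exact ((sectionMeas hZ 0).inv).mul (sectionMeas hZ t)

end ThetaFacts

/-- Transfer of convergence in measure under multiplication by a fixed random variable. -/
lemma tendstoInMeasure_mul {Ω : Type*} [MeasurableSpace Ω] {P : Measure Ω}
    [IsFiniteMeasure P] {ι : Type*} {lf : Filter ι} {f : ι → Ω → ℝ} {g : Ω → ℝ}
    {c : Ω → ℝ} (hc : Measurable c) (hfg : TendstoInMeasure P f lf g) :
    TendstoInMeasure P (fun i ω => c ω * f i ω) lf (fun ω => c ω * g ω) := by
  rw [tendstoInMeasure_iff_dist] at hfg ⊢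
  intro ε hε
  rw [ENNReal.tendsto_nhds_zero]
  intro δ hδ
  obtain ⟨M, hM0, hMle⟩ : ∃ M : ℝ, 0 < M ∧ P {ω | M < |c ω|} ≤ δ / 2 := by
    have hmeas : ∀ n : ℕ, NullMeasurableSet {ω | (n : ℝ) < |c ω|} P :=
      fun n => (measurableSet_lt measurable_const hc.abs).nullMeasurableSet
    have hanti : Antitone fun n : ℕ => {ω | (n : ℝ) < |c ω|} := by
      intro m n hmn ω hω
      simp only [Set.mem_setOf_eq] at hω ⊢
      have hcast : (m : ℝ) ≤ (n : ℝ) := Nat.cast_le.mpr hmn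
      exact lt_of_le_of_lt hcast hω
    have hempty : (⋂ n : ℕ, {ω | (n : ℝ) < |c ω|}) = ∅ := by
      ext ω
      simp only [Set.mem_iInter, Set.mem_setOf_eq, Set.mem_empty_iff_false, iff_false, not_forall,
        not_lt]
      obtain ⟨n, hn⟩ := exists_nat_gt |c ω|
      exact ⟨n, hn.le⟩
    have htend := tendsto_measure_iInter_atTop hmeas hanti ⟨0, measure_ne_top _ _⟩
    rw [hempty, measure_empty] at htend
    have := (ENNReal.tendsto_nhds_zero.mp htend) (δ / 2) (ENNReal.half_pos hδ.ne')
    obtain ⟨n, hn⟩ := this.exists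
    refine ⟨(n : ℝ) + 1, by positivity, ?_⟩
    refine le_trans (measure_mono ?_) hn
    intro ω hω
    simp only [Set.mem_setOf_eq] at hω ⊢
    linarith
  have h2 := (ENNReal.tendsto_nhds_zero.mp (hfg (ε / M) (div_pos hε hM0))) (δ / 2)
    (ENNReal.half_pos hδ.ne')
  filter_upwards [h2] with i hi
  have hsubset : {ω | ε ≤ dist (c ω * f i ω) (c ω * g ω)} ⊆
      {ω | M < |c ω|} ∪ {ω | ε / M ≤ dist (f i ω) (g ω)} := by
    intro ω hω
    by_cases hM : M < |c ω|
    · left; exact hM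
    · right
      push_neg at hM
      have hd : dist (c ω * f i ω) (c ω * g ω) = |c ω| * dist (f i ω) (g ω) := by
        rw [Real.dist_eq, Real.dist_eq, ← mul_sub, abs_mul]
      have hω' : ε ≤ |c ω| * dist (f i ω) (g ω) := by rw [← hd]; exact hω
      simp only [Set.mem_setOf_eq]
      rw [div_le_iff₀ hM0]
      calc ε ≤ |c ω| * dist (f i ω) (g ω) := hω'
        _ ≤ M * dist (f i ω) (g ω) := mul_le_mul_of_nonneg_right hM dist_nonneg
        _ = dist (f i ω) (g ω) * M := mul_comm _ _
  calc P {ω | ε ≤ dist (c ω * f i ω) (c ω * g ω)}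
      ≤ P ({ω | M < |c ω|} ∪ {ω | ε / M ≤ dist (f i ω) (g ω)}) := measure_mono hsubset
    _ ≤ P {ω | M < |c ω|} + P {ω | ε / M ≤ dist (f i ω) (g ω)} := measure_union_le _ _
    _ ≤ δ / 2 + δ / 2 := add_le_add hMle hi
    _ = δ := ENNReal.add_halves δ

/-- Transfer of convergence in measure to an absolutely continuous finite measure. -/
lemma tendstoInMeasure_withDensity {Ω : Type*} [MeasurableSpace Ω] {P : Measure Ω}
    {ρ : Ω → ℝ≥0∞} (hρ : Measurable ρ) (hfin : ∫⁻ ω, ρ ω ∂P ≠ ⊤)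
    {ι : Type*} {lf : Filter ι} {f : ι → Ω → ℝ} {g : Ω → ℝ}
    (hfg : TendstoInMeasure P f lf g) : TendstoInMeasure (P.withDensity ρ) f lf g := by
  intro ε hε
  rw [ENNReal.tendsto_nhds_zero]
  intro δ hδ
  obtain ⟨η, hη, hηle⟩ := exists_pos_setLIntegral_lt_of_measure_lt hfin hδ.ne'
  have hev := (hfg ε hε).eventually_lt_const hη
  filter_upwards [hev] with i hi
  set A := {ω | ε ≤ edist (f i ω) (g ω)}
  have hsub : A ⊆ toMeasurable P A := subset_toMeasurable P A
  calc P.withDensity ρ A ≤ P.withDensity ρ (toMeasurable P A) := measure_mono hsub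
    _ = ∫⁻ ω in toMeasurable P A, ρ ω ∂P := withDensity_apply ρ (measurableSet_toMeasurable P A)
    _ ≤ δ := by
        refine le_of_lt (hηle _ ?_)
        rw [measure_toMeasurable]
        exact hi

section ThetaMemK

variable {Ω : Type*} [MeasurableSpace Ω] {P : Measure Ω} {S : Set (Tl l)}
  {μT : Measure (Tl l)} {D : Set (Tl l)} {nrm : Ed d → ℝ} {α : ℝ} {Z : Ω → Path l d}

lemma lintegral_phat (hZ : IsRF P S nrm Z) (hα : 0 < α) (g : Ω → ℝ≥0∞) :
    ∫⁻ ω, g ω ∂(Phat P nrm α Z) = ∫⁻ ω, mA nrm α (Z ω 0) * g ω ∂P := by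
  rw [Phat, lintegral_withDensity_eq_lintegral_mul_non_measurable P (mA_meas hZ hα 0)
    (Filter.Eventually.of_forall fun ω => mA_lt_top α _)]
  simp only [Pi.mul_apply]

lemma isRF_theta [IsFiniteMeasure P] (hnrm : HomNorm nrm) (hα : 0 < α) (hZ : IsRF P S nrm Z)
    (h01 : (∫⁻ ω, mA nrm α (Z ω 0) ∂P) = 1) :
    IsRF (Phat P nrm α Z) S nrm (Theta nrm Z) := by
  constructor
  · have heq : (fun p : Ω × Tl l => nrm (Theta nrm Z p.1 p.2)) =
        fun p : Ω × Tl l => (nrm (Z p.1 0))⁻¹ * nrm (Z p.1 p.2) :=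
      funext fun p => nrm_theta hnrm Z p.1 p.2
    rw [heq]
    exact (((sectionMeas hZ 0).comp measurable_fst).inv).mul hZ.jointMeas
  · intro hSuniv
    obtain ⟨D', hD'c, hD'd, hsep⟩ := hZ.separable hSuniv
    refine ⟨D', hD'c, hD'd, ?_⟩
    intro U hU
    have hle : ae (Phat P nrm α Z) ≤ ae P :=
      Measure.AbsolutelyContinuous.ae_le (withDensity_absolutelyContinuous P _)
    filter_upwards [(hsep U hU).filter_mono hle] with ω hω
    have hrw : ∀ t : Tl l, ENNReal.ofReal (nrm (Theta nrm Z ω t)) =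
        ENNReal.ofReal ((nrm (Z ω 0))⁻¹) * ENNReal.ofReal (nrm (Z ω t)) := by
      intro t
      rw [nrm_theta hnrm, ENNReal.ofReal_mul (inv_nonneg.mpr (hnrm.2.1 _))]
    simp only [hrw, ← ENNReal.mul_iSup]
    rw [hω]
  · intro hSuniv t ε
    obtain ⟨g, hg, hgt⟩ := hZ.qsc hSuniv t ε
    refine ⟨fun ω => (nrm (Z ω 0))⁻¹ * g ω, ?_, ?_⟩
    · have h1 : TendstoInMeasure P (fun s ω => (nrm (Z ω 0))⁻¹ * nrm (Z ω s))
          (nhdsWithin t (quadrant t ε)) (fun ω => (nrm (Z ω 0))⁻¹ * g ω) :=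
        tendstoInMeasure_mul ((sectionMeas hZ 0).inv) hg
      have h2 := tendstoInMeasure_withDensity (mA_meas hZ hα 0)
        (by rw [h01]; exact ENNReal.one_ne_top) h1
      have heq : (fun (s : Tl l) (ω : Ω) => nrm (Theta nrm Z ω s)) =
          fun s ω => (nrm (Z ω 0))⁻¹ * nrm (Z ω s) :=
        funext fun s => funext fun ω => nrm_theta hnrm Z ω s
      rw [heq]
      exact h2
    · intro hε
      rw [hgt hε]
      funext ω
      exact (nrm_theta hnrm Z ω t).symm

lemma condC1_theta (hnrm : HomNorm nrm) (hα : 0 < α) (hZ : IsRF P S nrm Z)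
    (hC1 : CondC1 P S nrm α Z) : CondC1 (Phat P nrm α Z) S nrm α (Theta nrm Z) := by
  intro a ha
  rw [lintegral_phat hZ hα]
  refine lt_of_le_of_lt (lintegral_mono fun ω => ?_) (hC1 a ha)
  simp only [ENNReal.mul_iSup]
  refine iSup₂_le fun t ht => ?_
  exact le_trans (rho_mul_mA_le hnrm hα ω t)
    (le_iSup₂ (f := fun (t : Tl l) (_ : t ∈ S ∩ box a) => mA nrm α (Z ω t)) t ht)

lemma posSup_theta (hset : Setting S μT D) (hnrm : HomNorm nrm) (hα : 0 < α)
    (hZ : IsRF P S nrm Z) (h01 : (∫⁻ ω, mA nrm α (Z ω 0) ∂P) = 1) :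
    PosSup (Phat P nrm α Z) S nrm (Theta nrm Z) := by
  have hAm : MeasurableSet {ω | 0 < nrm (Z ω 0)} :=
    measurableSet_lt measurable_const (sectionMeas hZ 0)
  have huniv : (Phat P nrm α Z) Set.univ = 1 := by
    rw [Phat, withDensity_apply _ MeasurableSet.univ, setLIntegral_univ, h01]
  have h1 : (Phat P nrm α Z) {ω | 0 < nrm (Z ω 0)} = 1 := by
    have hc : ∫⁻ ω in {ω | 0 < nrm (Z ω 0)}ᶜ, mA nrm α (Z ω 0) ∂P = 0 := by
      have hzero : ∀ᵐ ω ∂P, ω ∈ {ω | 0 < nrm (Z ω 0)}ᶜ →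
          mA nrm α (Z ω 0) = (fun _ => (0 : ℝ≥0∞)) ω := by
        refine Filter.Eventually.of_forall fun ω hω => ?_
        simp only [Set.mem_compl_iff, Set.mem_setOf_eq, not_lt] at hω
        exact (mA_eq_zero_iff hnrm hα _).mpr (le_antisymm hω (hnrm.2.1 _))
      rw [setLIntegral_congr_fun_ae hAm.compl hzero, lintegral_zero]
    have hsplit := lintegral_add_compl (μ := P) (fun ω => mA nrm α (Z ω 0)) hAm
    rw [hc, add_zero] at hsplit
    rw [Phat, withDensity_apply _ hAm, hsplit, h01]
  show (Phat P nrm α Z) {ω | ∃ t ∈ S, 0 < nrm (Theta nrm Z ω t)} = 1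
  refine le_antisymm ?_ ?_
  · rw [← huniv]; exact measure_mono (Set.subset_univ _)
  · rw [← h1]
    refine measure_mono fun ω hω => ?_
    refine ⟨0, setting_zero_mem hset, ?_⟩
    rw [nrm_theta hnrm, inv_mul_cancel₀ (ne_of_gt hω)]
    exact one_pos

lemma funIdent_theta (hnrm : HomNorm nrm) (hα : 0 < α) (hZ : IsRF P S nrm Z)
    (hi : P {ω | nrm (Z ω 0) = 0} = 0) :
    FunIdent P (Phat P nrm α Z) S nrm α Z (Theta nrm Z) := by
  intro h hh F hF
  rw [lintegral_phat hZ hα]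
  refine lintegral_congr_ae ?_
  have hae : ∀ᵐ ω ∂P, nrm (Z ω 0) ≠ 0 := by
    rw [ae_iff]
    have heq : {ω | ¬ nrm (Z ω 0) ≠ 0} = {ω | nrm (Z ω 0) = 0} := by ext ω; simp
    rw [heq]; exact hi
  filter_upwards [hae] with ω h0
  have harg : (fun t => (nrm (Theta nrm Z ω h))⁻¹ • Theta nrm Z ω t) =
      fun t => (nrm (Z ω h))⁻¹ • Z ω t := by
    funext t
    show (nrm (Theta nrm Z ω h))⁻¹ • ((nrm (Z ω 0))⁻¹ • Z ω t) = _
    rw [smul_smul, nrm_theta hnrm]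
    congr 1
    rw [mul_inv, inv_inv, mul_right_comm, mul_inv_cancel₀ h0, one_mul]
  rw [← mul_assoc, rho_mul_mA_eq hnrm hα ω h h0, harg]

end ThetaMemK

end Aux

/-- Corollary A.5 (lem:elker): equivalent characterisations of a.s. positivity of `‖Z(0)‖`
for a shift-invariant class `K_α[Z]`. -/
theorem statement17 {l d : ℕ}
    (S : Set (Tl l)) (μT : Measure (Tl l)) (D : Set (Tl l)) (hset : Setting S μT D)
    (nrm : Ed d → ℝ) (hnrm : HomNorm nrm) (α : ℝ) (hα : 0 < α)
    (Ω : Type) [MeasurableSpace Ω] (P : Measure Ω) [IsProbabilityMeasure P]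
    (hPc : P.IsComplete)
    (Z : Ω → Path l d) (hZ : IsRF P S nrm Z)
    (hC1 : CondC1 P S nrm α Z) (hpos : PosSup P S nrm Z)
    (h01 : (∫⁻ ω, mA nrm α (Z ω 0) ∂P) = 1)
    (hshift : ShiftInvariantK P S nrm α Z) :
    -- (i) ↔ (ii) (some version)
    (P {ω | 0 < nrm (Z ω 0)} = 1 ↔
      ∃ (Ω' : Type) (_ : MeasurableSpace Ω') (P' : Measure Ω'),
        IsProbabilityMeasure P' ∧ P'.IsComplete ∧
          ∃ Z' : Ω' → Path l d, MemK P P' S nrm α Z Z' ∧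
            ∀ t ∈ S, P' {ω | 0 < nrm (Z' ω t)} = 1) ∧
    -- (ii): some version ↔ all version
    ((∃ (Ω' : Type) (_ : MeasurableSpace Ω') (P' : Measure Ω'),
        IsProbabilityMeasure P' ∧ P'.IsComplete ∧
          ∃ Z' : Ω' → Path l d, MemK P P' S nrm α Z Z' ∧
            ∀ t ∈ S, P' {ω | 0 < nrm (Z' ω t)} = 1) ↔
      (∀ (Ω' : Type) (_ : MeasurableSpace Ω') (P' : Measure Ω'),
        IsProbabilityMeasure P' → P'.IsComplete →
        ∀ Z' : Ω' → Path l d, MemK P P' S nrm α Z Z' →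
          ∀ t ∈ S, P' {ω | 0 < nrm (Z' ω t)} = 1)) ∧
    -- (i) ↔ (iii)
    (P {ω | 0 < nrm (Z ω 0)} = 1 ↔
      ∀ t ∈ S, (Phat P nrm α Z) {ω | 0 < nrm (Theta nrm Z ω t)} = 1) ∧
    -- (i) ↔ (iv)
    (P {ω | 0 < nrm (Z ω 0)} = 1 ↔
      MemK P (Phat P nrm α Z) S nrm α Z (Theta nrm Z)) := by
  classical
  have hS0 : (0 : Tl l) ∈ S := setting_zero_mem hset
  have hAshift : ∀ {s h : Tl l}, s ∈ S → h ∈ S → ∀ u : Tl l,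
      Afun nrm α P Z (s - h) (u - h) = Afun nrm α P Z s u :=
    fun hs hh u => shift_Afun hset hnrm hα hshift hs hh u
  have hNm : MeasurableSet {ω | nrm (Z ω 0) = 0} :=
    (sectionMeas hZ 0) (measurableSet_singleton 0)
  have hposiff : P {ω | 0 < nrm (Z ω 0)} = 1 ↔ P {ω | nrm (Z ω 0) = 0} = 0 :=
    pos_compl_iff hnrm hZ 0
  have hi_to_zero : P {ω | 0 < nrm (Z ω 0)} = 1 →
      ∀ s ∈ S, ∀ t ∈ S, Afun nrm α P Z s t = 0 := by
    intro hi s hs t ht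
    have h1 := hAshift hs ht t
    rw [sub_self] at h1
    rw [← h1]
    exact Afun_zero_of_null hZ (hposiff.mp hi) (s - t)
  have hzero_to_i : (∀ s ∈ S, Afun nrm α P Z s 0 = 0) → P {ω | 0 < nrm (Z ω 0)} = 1 := by
    intro hzero
    rw [hposiff]
    refine null_of_weighted_null hset hnrm hα hZ hpos hNm ?_
    intro s hs
    rw [← Afun_eq_set hZ s 0]
    exact hzero s hs
  have hi_to_all : P {ω | 0 < nrm (Z ω 0)} = 1 →
      ∀ (Ω' : Type) (m' : MeasurableSpace Ω') (P' : Measure Ω'),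
        IsProbabilityMeasure P' → P'.IsComplete →
        ∀ Z' : Ω' → Path l d, MemK P P' S nrm α Z Z' →
          ∀ t ∈ S, P' {ω | 0 < nrm (Z' ω t)} = 1 := by
    intro hi Ω' m' P' hp' hc' Z' hmem t ht
    haveI := hp'
    rw [pos_compl_iff hnrm hmem.1 t]
    refine null_of_weighted_null hset hnrm hα hmem.1 hmem.2.2.1
      ((sectionMeas hmem.1 t) (measurableSet_singleton 0)) ?_
    intro s hs
    rw [← Afun_eq_set hmem.1 s t, memK_Afun hnrm hα hmem.2.2.2 hs t]
    exact hi_to_zero hi s hs t ht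
  have hsome_to_i : (∃ (Ω' : Type) (_ : MeasurableSpace Ω') (P' : Measure Ω'),
      IsProbabilityMeasure P' ∧ P'.IsComplete ∧ ∃ Z' : Ω' → Path l d,
        MemK P P' S nrm α Z Z' ∧ ∀ t ∈ S, P' {ω | 0 < nrm (Z' ω t)} = 1) →
      P {ω | 0 < nrm (Z ω 0)} = 1 := by
    rintro ⟨Ω', m', P', hp', hc', Z', hmem, hall⟩
    haveI := hp'
    refine hzero_to_i fun s hs => ?_
    rw [← memK_Afun hnrm hα hmem.2.2.2 hs 0]
    exact Afun_zero_of_null hmem.1 ((pos_compl_iff hnrm hmem.1 0).mp (hall 0 hS0)) s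
  have hi_to_some : P {ω | 0 < nrm (Z ω 0)} = 1 →
      (∃ (Ω' : Type) (_ : MeasurableSpace Ω') (P' : Measure Ω'),
        IsProbabilityMeasure P' ∧ P'.IsComplete ∧ ∃ Z' : Ω' → Path l d,
          MemK P P' S nrm α Z Z' ∧ ∀ t ∈ S, P' {ω | 0 < nrm (Z' ω t)} = 1) := by
    intro hi
    obtain ⟨Ω', m', P', hp', hc', Z', hmem, -⟩ := hshift
    exact ⟨Ω', m', P', hp', hc', Z', hmem, hi_to_all hi Ω' m' P' hp' hc' Z' hmem⟩
  have hθm : ∀ t : Tl l, Measurable fun ω => nrm (Theta nrm Z ω t) :=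
    theta_section_meas hnrm hZ
  have hρm : Measurable fun ω => mA nrm α (Z ω 0) := mA_meas hZ hα 0
  have hiff3 : ∀ t : Tl l,
      ((Phat P nrm α Z) {ω | 0 < nrm (Theta nrm Z ω t)} = 1 ↔ Afun nrm α P Z 0 t = 0) := by
    intro t
    have hAm : MeasurableSet {ω | 0 < nrm (Theta nrm Z ω t)} :=
      measurableSet_lt measurable_const (hθm t)
    have hindm : Measurable
        ({ω | 0 < nrm (Theta nrm Z ω t)}.indicator fun ω => mA nrm α (Z ω 0)) :=
      hρm.indicator hAm
    have hsum : (Phat P nrm α Z) {ω | 0 < nrm (Theta nrm Z ω t)} + Afun nrm α P Z 0 t = 1 := by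
      rw [Phat, withDensity_apply _ hAm, ← lintegral_indicator hAm]
      rw [show Afun nrm α P Z 0 t
        = ∫⁻ ω, mA nrm α (Z ω 0) * (if nrm (Z ω t) = 0 then 1 else 0) ∂P from rfl]
      rw [← lintegral_add_left hindm]
      refine (lintegral_congr fun ω => ?_).trans h01
      by_cases h0 : nrm (Z ω 0) = 0
      · have hz : mA nrm α (Z ω 0) = 0 := (mA_eq_zero_iff hnrm hα _).mpr h0
        simp [Set.indicator_apply, hz]
      · by_cases ht : nrm (Z ω t) = 0
        · have hnot : ¬ 0 < nrm (Theta nrm Z ω t) := by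
            rw [nrm_theta hnrm, ht, mul_zero]; exact lt_irrefl 0
          simp [Set.indicator_apply, hnot, ht]
        · have hpos0 : 0 < nrm (Z ω 0) := lt_of_le_of_ne (hnrm.2.1 _) (Ne.symm h0)
          have hpost : 0 < nrm (Z ω t) := lt_of_le_of_ne (hnrm.2.1 _) (Ne.symm ht)
          have hmem : 0 < nrm (Theta nrm Z ω t) := by
            rw [nrm_theta hnrm]; exact mul_pos (inv_pos.mpr hpos0) hpost
          simp [Set.indicator_apply, hmem, ht]
    constructor
    · intro h
      rw [h] at hsum
      exact WithTop.add_left_cancel ENNReal.one_ne_top (hsum.trans (add_zero 1).symm)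
    · intro h
      rw [h, add_zero] at hsum
      exact hsum
  have hG3 : P {ω | 0 < nrm (Z ω 0)} = 1 ↔
      ∀ t ∈ S, (Phat P nrm α Z) {ω | 0 < nrm (Theta nrm Z ω t)} = 1 := by
    constructor
    · intro hi t ht
      rw [hiff3 t]
      exact hi_to_zero hi 0 hS0 t ht
    · intro h3
      refine hzero_to_i fun s hs => ?_
      have h1 := hAshift hs hs 0
      rw [sub_self] at h1
      rw [← h1]
      exact (hiff3 (0 - s)).mp (h3 (0 - s) (setting_sub_mem hset hS0 hs))
  have hG4 : P {ω | 0 < nrm (Z ω 0)} = 1 ↔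
      MemK P (Phat P nrm α Z) S nrm α Z (Theta nrm Z) := by
    constructor
    · intro hi
      exact ⟨isRF_theta hnrm hα hZ h01, condC1_theta hnrm hα hZ hC1,
        posSup_theta hset hnrm hα hZ h01, funIdent_theta hnrm hα hZ (hposiff.mp hi)⟩
    · intro hmemT
      refine hzero_to_i fun s hs => ?_
      have hfi := hmemT.2.2.2 s hs (fun _ => 1) measurable_const
      simp only [mul_one] at hfi
      rw [lintegral_phat hZ hα] at hfi
      have hpt : (fun ω => mA nrm α (Z ω 0) * mA nrm α (Theta nrm Z ω s)) =
          fun ω => ({ω | nrm (Z ω 0) = 0}ᶜ).indicator (fun ω => mA nrm α (Z ω s)) ω := by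
        funext ω
        by_cases h0 : nrm (Z ω 0) = 0
        · have hz : mA nrm α (Z ω 0) = 0 := (mA_eq_zero_iff hnrm hα _).mpr h0
          simp [Set.indicator_apply, hz, h0]
        · rw [rho_mul_mA_eq hnrm hα ω s h0]
          simp [Set.indicator_apply, h0]
      rw [hpt, lintegral_indicator hNm.compl] at hfi
      have hsplit := lintegral_add_compl (μ := P) (fun ω => mA nrm α (Z ω s)) hNm
      rw [hfi] at hsplit
      rw [Afun_eq_set hZ s 0]
      have htot : ∫⁻ ω, mA nrm α (Z ω s) ∂P ≠ ⊤ := (mA_int_lt_top hC1 hs).ne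
      have hcancel : ∫⁻ ω in {ω | nrm (Z ω 0) = 0}, mA nrm α (Z ω s) ∂P
          + ∫⁻ ω, mA nrm α (Z ω s) ∂P = 0 + ∫⁻ ω, mA nrm α (Z ω s) ∂P := by
        rw [zero_add]; exact hsplit
      exact WithTop.add_right_cancel htot hcancel
  exact ⟨⟨hi_to_some, hsome_to_i⟩,
    ⟨fun hsome => hi_to_all (hsome_to_i hsome),
      fun hall => by
        obtain ⟨Ω', m', P', hp', hc', Z', hmem, -⟩ := hshift
        exact ⟨Ω', m', P', hp', hc', Z', hmem, hall Ω' m' P' hp' hc' Z' hmem⟩⟩,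
    hG3, hG4⟩

end SIRF
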